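/- For every odd integer n ≥ 1 and every t ∈ {2, 2n, n², 2n²}, there exists a pair of orthogonal cyclic P_n-decompositions of the complete multipartite graph K_{((2n²+t)/t)×t}, realized on vertex set Z_{2n²+t} with parts the cosets of the order-t subgroup J. -/
import Mathlib

private def rowg (A B r k : ℕ) : ℤ :=
  if 2 ∣ k then -((B * (k / 2) : ℕ) : ℤ) else ((A * r + B * (k / 2) + 1 : ℕ) : ℤ)


private lemma rowg_diff (A B r k : ℕ) :
    rowg A B r (k+1) - rowg A B r k = ((A*r + B*k + 1 : ℕ) : ℤ) ∨
    rowg A B r (k+1) - rowg A B r k = -((A*r + B*k + 1 : ℕ) : ℤ) := by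
  rcases Nat.even_or_odd k with ⟨j, hj⟩ | ⟨j, hj⟩
  · left
    have h1 : 2 ∣ k := ⟨j, by omega⟩
    have h2 : ¬ 2 ∣ (k+1) := by omega
    have h3 : k / 2 = j := by omega
    have h4 : (k+1) / 2 = j := by omega
    simp only [rowg, if_pos h1, if_neg h2, h3, h4]
    have : k = 2 * j := by omega
    subst this; push_cast; ring
  · right
    have h1 : ¬ 2 ∣ k := by omega
    have h2 : 2 ∣ (k+1) := by omega
    have h3 : k / 2 = j := by omega
    have h4 : (k+1) / 2 = j + 1 := by omega
    simp only [rowg, if_neg h1, if_pos h2, h3, h4]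
    have : k = 2 * j + 1 := by omega
    subst this; push_cast; ring

private lemma entry_lt (v n A B a b : ℕ) (hM : A*(n-1)+B*(n-1)+1 < v)
    (ha : a ≤ n-1) (hb : b ≤ n-1) : A*a + B*b + 1 < v := by
  have h1 : A*a ≤ A*(n-1) := Nat.mul_le_mul_left A ha
  have h2 : B*b ≤ B*(n-1) := Nat.mul_le_mul_left B hb
  omega

private lemma rowg_inj (v n A B r k k' : ℕ) (hn : 0 < n) (hB : 0 < B) (hr : r < n)
    (hM : A*(n-1)+B*(n-1)+1 < v)
    (hk : k ≤ n) (hk' : k' ≤ n)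
    (hdvd : (v:ℤ) ∣ (rowg A B r k - rowg A B r k')) : k = k' := by
  have key : ∀ a b : ℕ, a ≤ n-1 → b ≤ n-1 → ((A*a + B*b + 1 : ℕ) : ℤ) < v := by
    intro a b ha hb; exact_mod_cast entry_lt v n A B a b hM ha hb
  have hBb : ∀ b : ℕ, b ≤ n-1 → ((B*b : ℕ) : ℤ) < v := by
    intro b hb
    have := key 0 b (by omega) hb
    push_cast at this ⊢
    linarith
  rcases Nat.even_or_odd k with ⟨j, hj⟩ | ⟨j, hj⟩ <;>
    rcases Nat.even_or_odd k' with ⟨j', hj'⟩ | ⟨j', hj'⟩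
  · -- even, even
    have e1 : rowg A B r k = -((B*j : ℕ) : ℤ) := by
      simp only [rowg, if_pos (show 2 ∣ k from ⟨j, by omega⟩), show k/2 = j by omega]
    have e2 : rowg A B r k' = -((B*j' : ℕ) : ℤ) := by
      simp only [rowg, if_pos (show 2 ∣ k' from ⟨j', by omega⟩), show k'/2 = j' by omega]
    rw [e1, e2] at hdvd
    have b1 := hBb j (by omega)
    have b2 := hBb j' (by omega)
    have h0 : (-((B*j : ℕ) : ℤ) - -((B*j' : ℕ) : ℤ)) = 0 := by
      refine Int.eq_zero_of_abs_lt_dvd hdvd ?_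
      rw [abs_sub_lt_iff]
      constructor <;>
        simp only [neg_sub_neg] <;>
        nlinarith [Int.ofNat_nonneg (B*j), Int.ofNat_nonneg (B*j')]
    have he : (B*j : ℕ) = (B*j' : ℕ) := by
      have : ((B*j : ℕ) : ℤ) = ((B*j' : ℕ) : ℤ) := by linarith
      exact_mod_cast this
    have : j = j' := Nat.eq_of_mul_eq_mul_left hB he
    omega
  · -- even, odd : contradiction
    exfalso
    have e1 : rowg A B r k = -((B*j : ℕ) : ℤ) := by
      simp only [rowg, if_pos (show 2 ∣ k from ⟨j, by omega⟩), show k/2 = j by omega]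
    have e2 : rowg A B r k' = ((A*r + B*j' + 1 : ℕ) : ℤ) := by
      simp only [rowg, if_neg (show ¬ 2 ∣ k' by omega), show k'/2 = j' by omega]
    rw [e1, e2] at hdvd
    have hsum : rowg A B r k - rowg A B r k' = -((A*r + B*(j+j') + 1 : ℕ) : ℤ) := by
      rw [e1, e2]; push_cast; ring
    rw [e1, e2] at hsum
    rw [hsum] at hdvd
    have hb := key r (j+j') (by omega) (by omega)
    have h0 := Int.eq_zero_of_abs_lt_dvd hdvd (by
      rw [abs_neg, abs_of_nonneg (Int.ofNat_nonneg _)]; exact hb)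
    have : (A*r + B*(j+j') + 1 : ℕ) = 0 := by exact_mod_cast neg_eq_zero.mp h0
    omega
  · -- odd, even : contradiction
    exfalso
    have e1 : rowg A B r k = ((A*r + B*j + 1 : ℕ) : ℤ) := by
      simp only [rowg, if_neg (show ¬ 2 ∣ k by omega), show k/2 = j by omega]
    have e2 : rowg A B r k' = -((B*j' : ℕ) : ℤ) := by
      simp only [rowg, if_pos (show 2 ∣ k' from ⟨j', by omega⟩), show k'/2 = j' by omega]
    have hsum : rowg A B r k - rowg A B r k' = ((A*r + B*(j+j') + 1 : ℕ) : ℤ) := by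
      rw [e1, e2]; push_cast; ring
    rw [hsum] at hdvd
    have hb := key r (j+j') (by omega) (by omega)
    have h0 := Int.eq_zero_of_abs_lt_dvd hdvd (by
      rw [abs_of_nonneg (Int.ofNat_nonneg _)]; exact hb)
    have : (A*r + B*(j+j') + 1 : ℕ) = 0 := by exact_mod_cast h0
    omega
  · -- odd, odd
    have e1 : rowg A B r k = ((A*r + B*j + 1 : ℕ) : ℤ) := by
      simp only [rowg, if_neg (show ¬ 2 ∣ k by omega), show k/2 = j by omega]
    have e2 : rowg A B r k' = ((A*r + B*j' + 1 : ℕ) : ℤ) := by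
      simp only [rowg, if_neg (show ¬ 2 ∣ k' by omega), show k'/2 = j' by omega]
    have hsum : rowg A B r k - rowg A B r k' = ((B*j : ℕ) : ℤ) - ((B*j' : ℕ) : ℤ) := by
      rw [e1, e2]; push_cast; ring
    rw [hsum] at hdvd
    have b1 := hBb j (by omega)
    have b2 := hBb j' (by omega)
    have h0 : ((B*j : ℕ) : ℤ) - ((B*j' : ℕ) : ℤ) = 0 := by
      refine Int.eq_zero_of_abs_lt_dvd hdvd ?_
      rw [abs_sub_lt_iff]
      constructor <;> linarith [Int.ofNat_nonneg (B*j), Int.ofNat_nonneg (B*j')]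
    have he : (B*j : ℕ) = (B*j' : ℕ) := by
      have : ((B*j : ℕ) : ℤ) = ((B*j' : ℕ) : ℤ) := by linarith
      exact_mod_cast this
    have : j = j' := Nat.eq_of_mul_eq_mul_left hB he
    omega



-- entry as a ZMod element
private lemma entry_val (v n A B r c : ℕ) [NeZero v] (hM : A*(n-1)+B*(n-1)+1 < v)
    (hr : r < n) (hc : c < n) :
    (((A*r+B*c+1 : ℕ) : ZMod v)).val = A*r+B*c+1 ∧
    ((-((A*r+B*c+1 : ℕ) : ZMod v))).val = v - (A*r+B*c+1) ∧
    ((A*r+B*c+1 : ℕ) : ZMod v) ≠ 0 := by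
  have hlt : A*r+B*c+1 < v := entry_lt v n A B r c hM (by omega) (by omega)
  have h1 : (((A*r+B*c+1 : ℕ) : ZMod v)).val = A*r+B*c+1 := ZMod.val_cast_of_lt hlt
  have h2 : ((A*r+B*c+1 : ℕ) : ZMod v) ≠ 0 := by
    intro h
    rw [h] at h1
    simp [ZMod.val_zero] at h1
  refine ⟨h1, ?_, h2⟩
  rw [ZMod.neg_val, if_neg h2, h1]

private lemma entry_inj (v n A B r c r' c' : ℕ) [NeZero v]
    (hA : 0 < A) (hB : 0 < B)
    (hM : A*(n-1)+B*(n-1)+1 < v)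
    (hBA : B*(n-1) < A)
    (hC2 : ∀ a a' b b' : ℕ, a < n → a' < n → b < n → b' < n →
      A*a + A*a' + (B*b + B*b') + 2 ≠ v)
    (hr : r < n) (hc : c < n) (hr' : r' < n) (hc' : c' < n) :
    (((A*r+B*c+1 : ℕ) : ZMod v) = ((A*r'+B*c'+1 : ℕ) : ZMod v) → r = r' ∧ c = c') ∧
    (((A*r+B*c+1 : ℕ) : ZMod v) = -((A*r'+B*c'+1 : ℕ) : ZMod v) → False) := by
  have hv : 0 < v := Nat.pos_of_ne_zero (NeZero.ne v)
  have hlt : A*r+B*c+1 < v := entry_lt v n A B r c hM (by omega) (by omega)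
  have hlt' : A*r'+B*c'+1 < v := entry_lt v n A B r' c' hM (by omega) (by omega)
  constructor
  · intro h
    have h1 := (entry_val v n A B r c hM hr hc).1
    have h2 := (entry_val v n A B r' c' hM hr' hc').1
    rw [h] at h1
    have he : A*r+B*c+1 = A*r'+B*c'+1 := by rw [← h1, h2]
    -- now pure arithmetic
    have he' : A*r + B*c = A*r' + B*c' := by omega
    have hcc : B*c ≤ B*(n-1) := Nat.mul_le_mul_left B (by omega)
    have hcc' : B*c' ≤ B*(n-1) := Nat.mul_le_mul_left B (by omega)
    have hrr : r = r' := by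
      by_contra hne
      rcases Nat.lt_or_ge r r' with hlt2 | hge
      · have : A*r + A ≤ A*r' := by
          have : A*(r+1) ≤ A*r' := Nat.mul_le_mul_left A hlt2
          nlinarith
        omega
      · have hlt2 : r' < r := by omega
        have : A*r' + A ≤ A*r := by
          have : A*(r'+1) ≤ A*r := Nat.mul_le_mul_left A hlt2
          nlinarith
        omega
    subst hrr
    have : B*c = B*c' := by omega
    exact ⟨rfl, Nat.eq_of_mul_eq_mul_left hB this⟩
  · intro h
    have h2 := (entry_val v n A B r' c' hM hr' hc').2.1
    have h1 := (entry_val v n A B r c hM hr hc).1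
    rw [h] at h1
    rw [h2] at h1
    -- h1 : v - (A*r'+B*c'+1) = A*r+B*c+1
    exact hC2 r r' c c' hr hr' hc hc' (by omega)

-- J characterization
private lemma Jchar (v m : ℕ) [NeZero v] (hmv : m ∣ v) (x : ZMod v) :
    (∃ y : ZMod v, x = (m : ZMod v) * y) ↔ m ∣ x.val := by
  constructor
  · rintro ⟨y, rfl⟩
    have h0 : (ZMod.castHom hmv (ZMod m)) ((m : ZMod v) * y) = 0 := by
      rw [map_mul]
      simp
    rw [ZMod.castHom_apply] at h0
    have h1 : ((((m : ZMod v) * y).val : ℕ) : ZMod m) = 0 := by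
      rw [ZMod.natCast_val]; exact h0
    exact (ZMod.natCast_eq_zero_iff _ _).mp h1
  · rintro ⟨k, hk⟩
    refine ⟨(k : ZMod v), ?_⟩
    have hx : ((x.val : ℕ) : ZMod v) = x := by
      rw [ZMod.natCast_val, ZMod.cast_id]
    rw [← hx, hk]
    push_cast
    ring

private lemma sym2_diff {α : Type*} [SubtractionMonoid α] {a b u w : α}
    (h : s(a,b) = s(u,w)) : a - b = u - w ∨ a - b = -(u - w) := by
  rw [Sym2.eq_iff] at h
  rcases h with ⟨rfl, rfl⟩ | ⟨rfl, rfl⟩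
  · exact Or.inl rfl
  · right; rw [neg_sub]

private lemma decompNN (n k : ℕ) (h : k < n*n) : ∃ r c, r < n ∧ c < n ∧ k = n*r + c := by
  have hn : 0 < n := by
    rcases Nat.eq_zero_or_pos n with h0 | h0
    · subst h0; omega
    · exact h0
  refine ⟨k / n, k % n, ?_, Nat.mod_lt _ hn, ?_⟩
  · rw [Nat.div_lt_iff_lt_mul hn]; omega
  · exact (Nat.div_add_mod k n).symm

private lemma family (v n A B m : ℕ) [NeZero v] (hn : 0 < n) (hB : 0 < B)
    (hM : A*(n-1)+B*(n-1)+1 < v)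
    (hmv : m ∣ v)
    (hent : ∀ r c, r < n → c < n → ¬ m ∣ (A*r+B*c+1))
    (hinj2 : ∀ r c r' c', r < n → c < n → r' < n → c' < n →
      (((A*r+B*c+1 : ℕ) : ZMod v) = ((A*r'+B*c'+1 : ℕ) : ZMod v) → r = r' ∧ c = c') ∧
      (((A*r+B*c+1 : ℕ) : ZMod v) = -((A*r'+B*c'+1 : ℕ) : ZMod v) → False))
    (hcovE : ∀ x : ZMod v, ¬ m ∣ x.val → ∃ r c, r < n ∧ c < n ∧
      (x = ((A*r+B*c+1 : ℕ) : ZMod v) ∨ x = -((A*r+B*c+1 : ℕ) : ZMod v)))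
    (J : Set (ZMod v)) (hJ : ∀ x : ZMod v, x ∈ J ↔ m ∣ x.val) :
    ∃ D : Set (Fin (n+1) → ZMod v),
      (∀ p ∈ D, Function.Injective p ∧ ∀ k : Fin n, p k.castSucc - p k.succ ∉ J) ∧
      (∀ x y : ZMod v, x ≠ y → x - y ∉ J →
        ∃! p, p ∈ D ∧ ∃ k : Fin n, s(x,y) = s(p k.castSucc, p k.succ)) ∧
      (∀ p ∈ D, (fun k => p k + 1) ∈ D) ∧
      (∀ p ∈ D, ∃ r, r < n ∧ ∀ k : Fin n,
        (p k.castSucc - p k.succ = ((A*r+B*k.val+1 : ℕ) : ZMod v) ∨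
         p k.castSucc - p k.succ = -((A*r+B*k.val+1 : ℕ) : ZMod v))) := by
  classical
  set P : ℕ → ZMod v → (Fin (n+1) → ZMod v) :=
    fun r i k => ((rowg A B r k.val : ℤ) : ZMod v) + i with hP
  have hdiff : ∀ (r : ℕ) (i : ZMod v) (k : Fin n),
      (P r i) k.castSucc - (P r i) k.succ = ((A*r+B*k.val+1 : ℕ) : ZMod v) ∨
      (P r i) k.castSucc - (P r i) k.succ = -((A*r+B*k.val+1 : ℕ) : ZMod v) := by
    intro r i k
    have hv : (P r i) k.castSucc - (P r i) k.succ
        = (((rowg A B r k.val - rowg A B r (k.val+1)) : ℤ) : ZMod v) := by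
      simp only [hP, Fin.coe_castSucc, Fin.val_succ]
      push_cast
      ring
    rcases rowg_diff A B r k.val with h | h
    · right
      rw [hv, show rowg A B r k.val - rowg A B r (k.val+1)
            = -((A*r+B*k.val+1 : ℕ) : ℤ) by linarith]
      push_cast; ring
    · left
      rw [hv, show rowg A B r k.val - rowg A B r (k.val+1)
            = ((A*r+B*k.val+1 : ℕ) : ℤ) by linarith]
      push_cast; ring
  have hnotJ : ∀ r c, r < n → c < n →
      ((A*r+B*c+1 : ℕ) : ZMod v) ∉ J ∧ (-((A*r+B*c+1 : ℕ) : ZMod v)) ∉ J := by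
    intro r c hr hc
    obtain ⟨h1, h2, _⟩ := entry_val v n A B r c hM hr hc
    have hlt : A*r+B*c+1 < v := entry_lt v n A B r c hM (by omega) (by omega)
    constructor
    · rw [hJ, h1]; exact hent r c hr hc
    · rw [hJ, h2]
      intro hd
      have : m ∣ (A*r+B*c+1) := by
        have h5 := Nat.dvd_sub hmv hd
        rwa [show v - (v - (A*r+B*c+1)) = A*r+B*c+1 by omega] at h5
      exact hent r c hr hc this
  refine ⟨{p | ∃ r, r < n ∧ ∃ i, p = P r i}, ?_, ?_, ?_, ?_⟩
  · -- paths
    rintro p ⟨r, hr, i, rfl⟩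
    constructor
    · intro k k' hkk
      have h1 : ((rowg A B r k.val : ℤ) : ZMod v) = ((rowg A B r k'.val : ℤ) : ZMod v) := by
        have h0 : ((rowg A B r k.val : ℤ) : ZMod v) + i
            = ((rowg A B r k'.val : ℤ) : ZMod v) + i := hkk
        exact add_right_cancel h0
      have h2 : (v:ℤ) ∣ (rowg A B r k.val - rowg A B r k'.val) := by
        have h3 := (ZMod.intCast_eq_intCast_iff _ _ _).mp h1
        exact Int.ModEq.dvd h3.symm
      exact Fin.ext (rowg_inj v n A B r k.val k'.val hn hB hr hM
        (Nat.lt_succ_iff.mp k.isLt) (Nat.lt_succ_iff.mp k'.isLt) h2)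
    · intro k
      rcases hdiff r i k with h | h <;> rw [h]
      · exact (hnotJ r k.val hr k.isLt).1
      · exact (hnotJ r k.val hr k.isLt).2
  · -- exactly-one coverage
    intro x y hxy hxyJ
    have hnd : ¬ m ∣ (x - y).val := by
      intro h; exact hxyJ ((hJ (x - y)).mpr h)
    obtain ⟨r, c, hr, hc, hcase⟩ := hcovE (x - y) hnd
    have hEne : ((A*r+B*c+1 : ℕ) : ZMod v) ≠ -((A*r+B*c+1 : ℕ) : ZMod v) := by
      intro h
      exact ((hinj2 r c r c hr hc hr hc).2 h)
    set k0 : Fin n := ⟨c, hc⟩ with hk0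
    have hk0c : (k0.castSucc).val = c := rfl
    have hk0s : (k0.succ).val = c + 1 := rfl
    set δ : ZMod v := ((rowg A B r c - rowg A B r (c+1) : ℤ) : ZMod v) with hδdef
    have hδ : δ = ((A*r+B*c+1 : ℕ) : ZMod v) ∨ δ = -((A*r+B*c+1 : ℕ) : ZMod v) := by
      rcases rowg_diff A B r c with h | h
      · right
        rw [hδdef, show rowg A B r c - rowg A B r (c+1) = -((A*r+B*c+1 : ℕ) : ℤ) by linarith]
        push_cast; ring
      · left
        rw [hδdef, show rowg A B r c - rowg A B r (c+1) = ((A*r+B*c+1 : ℕ) : ℤ) by linarith]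
        push_cast; ring
    have hpd : ∀ i : ZMod v, (P r i) k0.castSucc = ((rowg A B r c : ℤ) : ZMod v) + i ∧
        (P r i) k0.succ = ((rowg A B r c : ℤ) : ZMod v) + i - δ := by
      intro i
      constructor
      · simp only [hP, hk0c]
      · simp only [hP, hk0s, hδdef]
        push_cast
        ring
    have hδd : δ = x - y ∨ δ = -(x - y) := by
      rcases hδ with h1 | h1 <;> rcases hcase with h2 | h2
      · left; rw [h1, h2]
      · right; rw [h1, h2, neg_neg]
      · right; rw [h1, h2]
      · left; rw [h1, h2]
    have hdne : x - y ≠ -(x - y) := by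
      rcases hcase with h2 | h2 <;> rw [h2]
      · intro h; exact hEne h
      · rw [neg_neg]; intro h; exact hEne h.symm
    have huniq : ∀ (z : ZMod v), (∀ i', i' = z - ((rowg A B r c : ℤ) : ZMod v) →
          ((x = ((rowg A B r c : ℤ) : ZMod v) + i' ∧ y = ((rowg A B r c : ℤ) : ZMod v) + i' - δ) ∨
           (x = ((rowg A B r c : ℤ) : ZMod v) + i' - δ ∧ y = ((rowg A B r c : ℤ) : ZMod v) + i'))) →
        True := fun _ _ => trivial
    clear huniq
    rcases hδd with hδd | hδd
    · -- δ = x - y : put x at position c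
      refine ⟨P r (x - ((rowg A B r c : ℤ) : ZMod v)), ⟨⟨r, hr, _, rfl⟩, k0, ?_⟩, ?_⟩
      · obtain ⟨ha, hb⟩ := hpd (x - ((rowg A B r c : ℤ) : ZMod v))
        rw [ha, hb, hδd]
        congr 1 <;> ring
      · rintro p' ⟨⟨r', hr', i', rfl⟩, k, hk⟩
        have hdd := hdiff r' i' k
        have hsd := sym2_diff hk
        have hE' : ((A*r'+B*k.val+1 : ℕ) : ZMod v) = x - y ∨
            ((A*r'+B*k.val+1 : ℕ) : ZMod v) = -(x - y) := by
          rcases hdd with h5 | h5 <;> rcases hsd with h6 | h6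
          · left; linear_combination - h5 - h6
          · right; linear_combination - h5 + h6
          · right; linear_combination h5 + h6
          · left; linear_combination h5 - h6
        have hEE : ((A*r'+B*k.val+1 : ℕ) : ZMod v) = ((A*r+B*c+1 : ℕ) : ZMod v) ∨
            ((A*r'+B*k.val+1 : ℕ) : ZMod v) = -((A*r+B*c+1 : ℕ) : ZMod v) := by
          rcases hE' with h5 | h5 <;> rcases hcase with h2 | h2
          · left; linear_combination h5 + h2
          · right; linear_combination h5 + h2
          · right; linear_combination h5 - h2
          · left; linear_combination h5 - h2
        rcases hEE with hEE | hEE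
        · obtain ⟨hrr, hkk⟩ := (hinj2 r' k.val r c hr' k.isLt hr hc).1 hEE
          subst hrr
          have hkk0 : k = k0 := Fin.ext hkk
          subst hkk0
          obtain ⟨ha, hb⟩ := hpd i'
          rw [Sym2.eq_iff] at hk
          rw [ha, hb] at hk
          rcases hk with ⟨hk1, hk2⟩ | ⟨hk1, hk2⟩
          · have hi' : i' = x - ((rowg A B r' c : ℤ) : ZMod v) := by
              linear_combination -hk1
            rw [hi']
          · exfalso
            exact hdne (by linear_combination hk1 - hk2 - hδd)
        · exact absurd hEE ((hinj2 r' k.val r c hr' k.isLt hr hc).2)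
    · -- δ = -(x - y) : put y at position c
      refine ⟨P r (y - ((rowg A B r c : ℤ) : ZMod v)), ⟨⟨r, hr, _, rfl⟩, k0, ?_⟩, ?_⟩
      · obtain ⟨ha, hb⟩ := hpd (y - ((rowg A B r c : ℤ) : ZMod v))
        rw [ha, hb, hδd]
        rw [Sym2.eq_iff]
        right
        constructor <;> ring
      · rintro p' ⟨⟨r', hr', i', rfl⟩, k, hk⟩
        have hdd := hdiff r' i' k
        have hsd := sym2_diff hk
        have hE' : ((A*r'+B*k.val+1 : ℕ) : ZMod v) = x - y ∨
            ((A*r'+B*k.val+1 : ℕ) : ZMod v) = -(x - y) := by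
          rcases hdd with h5 | h5 <;> rcases hsd with h6 | h6
          · left; linear_combination - h5 - h6
          · right; linear_combination - h5 + h6
          · right; linear_combination h5 + h6
          · left; linear_combination h5 - h6
        have hEE : ((A*r'+B*k.val+1 : ℕ) : ZMod v) = ((A*r+B*c+1 : ℕ) : ZMod v) ∨
            ((A*r'+B*k.val+1 : ℕ) : ZMod v) = -((A*r+B*c+1 : ℕ) : ZMod v) := by
          rcases hE' with h5 | h5 <;> rcases hcase with h2 | h2
          · left; linear_combination h5 + h2
          · right; linear_combination h5 + h2
          · right; linear_combination h5 - h2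
          · left; linear_combination h5 - h2
        rcases hEE with hEE | hEE
        · obtain ⟨hrr, hkk⟩ := (hinj2 r' k.val r c hr' k.isLt hr hc).1 hEE
          subst hrr
          have hkk0 : k = k0 := Fin.ext hkk
          subst hkk0
          obtain ⟨ha, hb⟩ := hpd i'
          rw [Sym2.eq_iff] at hk
          rw [ha, hb] at hk
          rcases hk with ⟨hk1, hk2⟩ | ⟨hk1, hk2⟩
          · exfalso
            exact hdne (by linear_combination hk1 - hk2 + hδd)
          · have hi' : i' = y - ((rowg A B r' c : ℤ) : ZMod v) := by
              linear_combination -hk2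
            rw [hi']
        · exact absurd hEE ((hinj2 r' k.val r c hr' k.isLt hr hc).2)
  · -- cyclic
    rintro p ⟨r, hr, i, rfl⟩
    refine ⟨r, hr, i + 1, ?_⟩
    funext k
    simp only [hP]
    ring
  · -- difference export
    rintro p ⟨r, hr, i, rfl⟩
    exact ⟨r, hr, fun k => hdiff r i k⟩

private theorem abstract_main (v n A B m : ℕ) [NeZero v] (hn : 0 < n)
    (hA : 0 < A) (hB : 0 < B) (hmv : m ∣ v)
    (hM : A*(n-1) + B*(n-1) + 1 < v)
    (hBA : B*(n-1) < A)
    (hC2 : ∀ r r' c c' : ℕ, r < n → r' < n → c < n → c' < n →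
      A*r + A*r' + (B*c + B*c') + 2 ≠ v)
    (hent : ∀ r c : ℕ, r < n → c < n → ¬ m ∣ (A*r + B*c + 1))
    (hcov : ∀ X : ℕ, 0 < X → X < v → ¬ m ∣ X →
      ∃ r c : ℕ, r < n ∧ c < n ∧ (A*r + B*c + 1 = X ∨ (A*r + B*c + 1) + X = v))
    (J : Set (ZMod v)) (hJ : ∀ x : ZMod v, x ∈ J ↔ m ∣ x.val) :
    ∃ D D' : Set (Fin (n + 1) → ZMod v),
      (∀ p ∈ D, Function.Injective p ∧
        ∀ k : Fin n, p k.castSucc - p k.succ ∉ J) ∧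
      (∀ p ∈ D', Function.Injective p ∧
        ∀ k : Fin n, p k.castSucc - p k.succ ∉ J) ∧
      (∀ x y : ZMod v, x ≠ y → x - y ∉ J →
        ∃! p, p ∈ D ∧ ∃ k : Fin n, s(x, y) = s(p k.castSucc, p k.succ)) ∧
      (∀ x y : ZMod v, x ≠ y → x - y ∉ J →
        ∃! p, p ∈ D' ∧ ∃ k : Fin n, s(x, y) = s(p k.castSucc, p k.succ)) ∧
      (∀ p ∈ D, (fun k => p k + 1) ∈ D) ∧
      (∀ p ∈ D', (fun k => p k + 1) ∈ D') ∧
      (∀ p ∈ D, ∀ q ∈ D',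
        {e : Sym2 (ZMod v) |
          (∃ k : Fin n, e = s(p k.castSucc, p k.succ)) ∧
          (∃ k : Fin n, e = s(q k.castSucc, q k.succ))}.Subsingleton) := by
  have hinj2 : ∀ r c r' c' : ℕ, r < n → c < n → r' < n → c' < n →
      (((A*r+B*c+1 : ℕ) : ZMod v) = ((A*r'+B*c'+1 : ℕ) : ZMod v) → r = r' ∧ c = c') ∧
      (((A*r+B*c+1 : ℕ) : ZMod v) = -((A*r'+B*c'+1 : ℕ) : ZMod v) → False) := by
    intro r c r' c' hr hc hr' hc'
    exact entry_inj v n A B r c r' c' hA hB hM hBA hC2 hr hc hr' hc'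
  have hcovE : ∀ x : ZMod v, ¬ m ∣ x.val → ∃ r c, r < n ∧ c < n ∧
      (x = ((A*r+B*c+1 : ℕ) : ZMod v) ∨ x = -((A*r+B*c+1 : ℕ) : ZMod v)) := by
    intro x hx
    have hx0 : x.val ≠ 0 := fun h => hx (h ▸ dvd_zero m)
    obtain ⟨r, c, hr, hc, hcase⟩ := hcov x.val (Nat.pos_of_ne_zero hx0) (ZMod.val_lt x) hx
    refine ⟨r, c, hr, hc, ?_⟩
    have hxx : ((x.val : ℕ) : ZMod v) = x := by rw [ZMod.natCast_val, ZMod.cast_id]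
    rcases hcase with h | h
    · left; rw [← hxx, ← h]
    · right
      have h0 : ((A*r+B*c+1 : ℕ) : ZMod v) + x = 0 := by
        rw [← hxx, ← Nat.cast_add, h, ZMod.natCast_self]
      linear_combination h0
  -- transposed versions
  have hM' : B*(n-1) + A*(n-1) + 1 < v := by linarith
  have hent' : ∀ r c : ℕ, r < n → c < n → ¬ m ∣ (B*r + A*c + 1) := by
    intro r c hr hc
    rw [show B*r + A*c + 1 = A*c + B*r + 1 by ring]
    exact hent c r hc hr
  have hinj2' : ∀ r c r' c' : ℕ, r < n → c < n → r' < n → c' < n →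
      (((B*r+A*c+1 : ℕ) : ZMod v) = ((B*r'+A*c'+1 : ℕ) : ZMod v) → r = r' ∧ c = c') ∧
      (((B*r+A*c+1 : ℕ) : ZMod v) = -((B*r'+A*c'+1 : ℕ) : ZMod v) → False) := by
    intro r c r' c' hr hc hr' hc'
    rw [show B*r + A*c + 1 = A*c + B*r + 1 by ring,
        show B*r' + A*c' + 1 = A*c' + B*r' + 1 by ring]
    constructor
    · intro h
      obtain ⟨h1, h2⟩ := (hinj2 c r c' r' hc hr hc' hr').1 h
      exact ⟨h2, h1⟩
    · exact (hinj2 c r c' r' hc hr hc' hr').2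
  have hcovE' : ∀ x : ZMod v, ¬ m ∣ x.val → ∃ r c, r < n ∧ c < n ∧
      (x = ((B*r+A*c+1 : ℕ) : ZMod v) ∨ x = -((B*r+A*c+1 : ℕ) : ZMod v)) := by
    intro x hx
    obtain ⟨r, c, hr, hc, hcase⟩ := hcovE x hx
    refine ⟨c, r, hc, hr, ?_⟩
    rw [show B*c + A*r + 1 = A*r + B*c + 1 by ring]
    exact hcase
  obtain ⟨D, hD1, hD2, hD3, hD4⟩ := family v n A B m hn hB hM hmv hent hinj2 hcovE J hJ
  obtain ⟨D', hD'1, hD'2, hD'3, hD'4⟩ := family v n B A m hn hA hM' hmv hent' hinj2' hcovE' J hJ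
  refine ⟨D, D', hD1, hD'1, hD2, hD'2, hD3, hD'3, ?_⟩
  intro p hp q hq
  obtain ⟨r0, hr0, hpe⟩ := hD4 p hp
  obtain ⟨c0, hc0, hqe⟩ := hD'4 q hq
  intro e he e' he'
  obtain ⟨⟨k, hek⟩, ⟨l, hel⟩⟩ := he
  obtain ⟨⟨k', hek'⟩, ⟨l', hel'⟩⟩ := he'
  have h1 : s(p k.castSucc, p k.succ) = s(q l.castSucc, q l.succ) := by rw [← hek, ← hel]
  have h2 : s(p k'.castSucc, p k'.succ) = s(q l'.castSucc, q l'.succ) := by rw [← hek', ← hel']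
  have key : ∀ (k : Fin n) (l : Fin n),
      s(p k.castSucc, p k.succ) = s(q l.castSucc, q l.succ) → k.val = c0 := by
    intro k l h
    have hd := sym2_diff h
    have hpk := hpe k
    have hql := hqe l
    rw [show (B*c0 + A*l.val + 1 : ℕ) = (A*l.val + B*c0 + 1 : ℕ) by ring] at hql
    have hEE : ((A*r0+B*k.val+1 : ℕ) : ZMod v) = ((A*l.val+B*c0+1 : ℕ) : ZMod v) ∨
        ((A*r0+B*k.val+1 : ℕ) : ZMod v) = -((A*l.val+B*c0+1 : ℕ) : ZMod v) := by
      rcases hpk with h5 | h5 <;> rcases hql with h6 | h6 <;> rcases hd with h7 | h7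
      · left; linear_combination h7 - h5 + h6
      · right; linear_combination h7 - h5 - h6
      · right; linear_combination h7 - h5 + h6
      · left; linear_combination h7 - h5 - h6
      · right; linear_combination -h7 + h5 - h6
      · left; linear_combination -h7 + h5 + h6
      · left; linear_combination -h7 + h5 - h6
      · right; linear_combination -h7 + h5 + h6
    rcases hEE with hEE | hEE
    · exact ((hinj2 r0 k.val l.val c0 hr0 k.isLt l.isLt hc0).1 hEE).2
    · exact absurd hEE ((hinj2 r0 k.val l.val c0 hr0 k.isLt l.isLt hc0).2)
  have hkc := key k l h1
  have hkc' := key k' l' h2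
  have hkk : k = k' := Fin.ext (hkc.trans hkc'.symm)
  rw [hek, hek', hkk]

/-- Proposition 4.3: for every odd n ≥ 1 and every t ∈ {2, 2n, n², 2n²}, there exists a pair of
orthogonal cyclic P_n-decompositions of the complete multipartite graph
K_{((2n²+t)/t)×t}, realized on vertex set Z_{2n²+t} (vertices x, y adjacent iff
x − y ∉ J, where J is the order-t subgroup of multiples of v/t = 2n²/t + 1).
A path with n edges is encoded as an injective map p : Fin (n+1) → Z_{2n²+t} whose
consecutive vertices are adjacent; its edges are the unordered pairs
s(p k, p (k+1)). -/
theorem stmt14 (n t : ℕ) (hn : 1 ≤ n) (hodd : Odd n)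
    (ht : t = 2 ∨ t = 2 * n ∨ t = n ^ 2 ∨ t = 2 * n ^ 2)
    (J : Set (ZMod (2 * n ^ 2 + t)))
    (hJ : J = {x : ZMod (2 * n ^ 2 + t) |
      ∃ y : ZMod (2 * n ^ 2 + t), x = ((2 * n ^ 2 / t + 1 : ℕ) : ZMod (2 * n ^ 2 + t)) * y}) :
    ∃ D D' : Set (Fin (n + 1) → ZMod (2 * n ^ 2 + t)),
      -- every member of D (resp. D') is a path of length n in K
      (∀ p ∈ D, Function.Injective p ∧
        ∀ k : Fin n, p k.castSucc - p k.succ ∉ J) ∧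
      (∀ p ∈ D', Function.Injective p ∧
        ∀ k : Fin n, p k.castSucc - p k.succ ∉ J) ∧
      -- every edge of K belongs to exactly one member of D (resp. of D')
      (∀ x y : ZMod (2 * n ^ 2 + t), x ≠ y → x - y ∉ J →
        ∃! p, p ∈ D ∧ ∃ k : Fin n, s(x, y) = s(p k.castSucc, p k.succ)) ∧
      (∀ x y : ZMod (2 * n ^ 2 + t), x ≠ y → x - y ∉ J →
        ∃! p, p ∈ D' ∧ ∃ k : Fin n, s(x, y) = s(p k.castSucc, p k.succ)) ∧
      -- both decompositions are cyclic
      (∀ p ∈ D, (fun k => p k + 1) ∈ D) ∧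
      (∀ p ∈ D', (fun k => p k + 1) ∈ D') ∧
      -- orthogonality: any path of D and any path of D' share at most one edge
      (∀ p ∈ D, ∀ q ∈ D',
        {e : Sym2 (ZMod (2 * n ^ 2 + t)) |
          (∃ k : Fin n, e = s(p k.castSucc, p k.succ)) ∧
          (∃ k : Fin n, e = s(q k.castSucc, q k.succ))}.Subsingleton) := by
  obtain ⟨k, rfl⟩ : ∃ k, n = k + 1 := ⟨n - 1, by omega⟩
  have hn1 : 0 < k + 1 := k.succ_pos
  rcases ht with rfl | rfl | rfl | rfl
  · -- t = 2 : A = k+1, B = 1, m = (k+1)^2+1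
    haveI : NeZero (2*(k+1)^2+2) := ⟨by positivity⟩
    have hmv : (k+1)^2+1 ∣ 2*(k+1)^2+2 := ⟨2, by ring⟩
    have hm : 2*(k+1)^2/2 + 1 = (k+1)^2+1 := by
      rw [Nat.mul_div_cancel_left _ (by norm_num : 0 < 2)]
    have hJ' : ∀ x : ZMod (2*(k+1)^2+2), x ∈ J ↔ ((k+1)^2+1) ∣ x.val := by
      intro x
      rw [hJ]
      simp only [Set.mem_setOf_eq, hm]
      exact Jchar _ _ hmv x
    refine abstract_main (2*(k+1)^2+2) (k+1) (k+1) 1 ((k+1)^2+1) hn1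
      hn1 one_pos hmv ?_ ?_ ?_ ?_ ?_ J hJ'
    · simp only [Nat.add_sub_cancel]
      nlinarith
    · simp only [Nat.add_sub_cancel]
      omega
    · intro r r' c c' hr hr' hc hc' heq
      have a1 : (k+1)*r ≤ (k+1)*k := Nat.mul_le_mul_left (k+1) (by omega)
      have a2 : (k+1)*r' ≤ (k+1)*k := Nat.mul_le_mul_left (k+1) (by omega)
      have e1 : 2*(k+1)^2+2 = (k+1)*k + (k+1)*k + 2*k + 4 := by ring
      rw [e1] at heq
      have hc2 : c ≤ k := by omega
      have hc2' : c' ≤ k := by omega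
      linarith
    · intro r c hr hc h
      have a1 : (k+1)*r ≤ (k+1)*k := Nat.mul_le_mul_left (k+1) (by omega)
      have hle := Nat.le_of_dvd (Nat.succ_pos _) h
      have e1 : (k+1)^2 + 1 = (k+1)*k + k + 2 := by ring
      have hc2 : c ≤ k := by omega
      linarith
    · intro X hX0 hXv hXd
      obtain ⟨M, hM2⟩ : ∃ M, (k+1)*(k+1) = M := ⟨_, rfl⟩
      have e2 : (k+1)^2 = M := by rw [← hM2]; ring
      have ev : 2*(k+1)^2+2 = 2*M+2 := by rw [e2]
      rw [ev] at hXv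
      have hXm : X ≠ (k+1)^2+1 := fun h => hXd (h ▸ dvd_refl _)
      rw [e2] at hXm
      by_cases hle : X ≤ M
      · obtain ⟨r, c, hr, hc, hrc⟩ := decompNN (k+1) (X-1)
          (by rw [hM2]; omega)
        refine ⟨r, c, hr, hc, Or.inl ?_⟩
        obtain ⟨a, ha⟩ : ∃ a, (k+1)*r = a := ⟨_, rfl⟩
        rw [ha] at hrc ⊢
        omega
      · obtain ⟨r, c, hr, hc, hrc⟩ := decompNN (k+1) (2*M+2-X-1)
          (by rw [hM2]; omega)
        refine ⟨r, c, hr, hc, Or.inr ?_⟩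
        rw [ev]
        obtain ⟨a, ha⟩ : ∃ a, (k+1)*r = a := ⟨_, rfl⟩
        rw [ha] at hrc ⊢
        omega
  · -- t = 2(k+1) : A = k+2, B = 1, m = k+2
    haveI : NeZero (2*(k+1)^2+2*(k+1)) := ⟨by positivity⟩
    have hmv : (k+2) ∣ 2*(k+1)^2+2*(k+1) := ⟨2*(k+1), by ring⟩
    have hm : 2*(k+1)^2/(2*(k+1)) + 1 = k+2 := by
      rw [show 2*(k+1)^2 = (2*(k+1))*(k+1) by ring,
        Nat.mul_div_cancel_left _ (by omega : 0 < 2*(k+1))]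
    have hJ' : ∀ x : ZMod (2*(k+1)^2+2*(k+1)), x ∈ J ↔ (k+2) ∣ x.val := by
      intro x
      rw [hJ]
      simp only [Set.mem_setOf_eq, hm]
      exact Jchar _ _ hmv x
    refine abstract_main (2*(k+1)^2+2*(k+1)) (k+1) (k+2) 1 (k+2) hn1
      (by omega) one_pos hmv ?_ ?_ ?_ ?_ ?_ J hJ'
    · simp only [Nat.add_sub_cancel]
      nlinarith
    · simp only [Nat.add_sub_cancel]
      omega
    · intro r r' c c' hr hr' hc hc' heq
      have a1 : (k+2)*r ≤ (k+2)*k := Nat.mul_le_mul_left (k+2) (by omega)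
      have a2 : (k+2)*r' ≤ (k+2)*k := Nat.mul_le_mul_left (k+2) (by omega)
      have e1 : 2*(k+1)^2+2*(k+1) = (k+2)*k + (k+2)*k + 2*k + 4 := by ring
      rw [e1] at heq
      have hc2 : c ≤ k := by omega
      have hc2' : c' ≤ k := by omega
      linarith
    · intro r c hr hc h
      have h2 : (k+2) ∣ (c + 1) := by
        have h3 : (k+2)*r + 1*c + 1 = (k+2)*r + (c+1) := by ring
        rw [h3] at h
        exact (Nat.dvd_add_right (dvd_mul_right (k+2) r)).mp h
      have := Nat.le_of_dvd (by omega) h2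
      omega
    · intro X hX0 hXv hXd
      obtain ⟨M, hM2⟩ : ∃ M, (k+1)*(k+2) = M := ⟨_, rfl⟩
      have ev : 2*(k+1)^2+2*(k+1) = 2*M := by rw [← hM2]; ring
      rw [ev] at hXv
      have hXM : X ≠ M := by
        intro h
        exact hXd (by rw [h, ← hM2]; exact ⟨k+1, by ring⟩)
      by_cases hle : X < M
      · refine ⟨X/(k+2), X%(k+2)-1, ?_, by
          have := Nat.mod_lt X (y := k+2) (by omega); omega, Or.inl ?_⟩
        · rw [Nat.div_lt_iff_lt_mul (by omega : 0 < k+2)]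
          calc X < M := hle
          _ = (k+1)*(k+2) := hM2.symm
        · have hdm := Nat.div_add_mod X (k+2)
          have hs0 : X % (k+2) ≠ 0 := fun h => hXd (Nat.dvd_of_mod_eq_zero h)
          obtain ⟨a, ha⟩ : ∃ a, (k+2)*(X/(k+2)) = a := ⟨_, rfl⟩
          rw [ha] at hdm ⊢
          omega
      · have hY0 : 0 < 2*M - X := by omega
        have hYd : ¬ (k+2) ∣ (2*M - X) := by
          intro h
          apply hXd
          have h2 : (k+2) ∣ 2*M := by rw [← hM2]; exact ⟨2*(k+1), by ring⟩
          have h3 := Nat.dvd_sub h2 h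
          rwa [show 2*M - (2*M - X) = X by omega] at h3
        have hYM : 2*M - X < M := by omega
        have hYM' : 2*M - X ≠ M := by
          intro h
          exact hYd (by rw [h, ← hM2]; exact ⟨k+1, by ring⟩)
        refine ⟨(2*M-X)/(k+2), (2*M-X)%(k+2)-1, ?_, by
          have := Nat.mod_lt (2*M-X) (y := k+2) (by omega); omega, Or.inr ?_⟩
        · rw [Nat.div_lt_iff_lt_mul (by omega : 0 < k+2)]
          calc 2*M - X < M := hYM
          _ = (k+1)*(k+2) := hM2.symm
        · have hdm := Nat.div_add_mod (2*M-X) (k+2)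
          have hs0 : (2*M-X) % (k+2) ≠ 0 := fun h => hYd (Nat.dvd_of_mod_eq_zero h)
          rw [ev]
          obtain ⟨a, ha⟩ : ∃ a, (k+2)*((2*M-X)/(k+2)) = a := ⟨_, rfl⟩
          rw [ha] at hdm ⊢
          omega
  · -- t = (k+1)^2 : A = 3(k+1), B = 3, m = 3
    haveI : NeZero (2*(k+1)^2+(k+1)^2) := ⟨by positivity⟩
    have hmv : 3 ∣ 2*(k+1)^2+(k+1)^2 := ⟨(k+1)^2, by ring⟩
    have hm : 2*(k+1)^2/(k+1)^2 + 1 = 3 := by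
      rw [Nat.mul_div_cancel _ (by positivity : 0 < (k+1)^2)]
    have hJ' : ∀ x : ZMod (2*(k+1)^2+(k+1)^2), x ∈ J ↔ 3 ∣ x.val := by
      intro x
      rw [hJ]
      simp only [Set.mem_setOf_eq, hm]
      exact Jchar _ _ hmv x
    refine abstract_main (2*(k+1)^2+(k+1)^2) (k+1) (3*(k+1)) 3 3 hn1
      (by omega) (by omega) hmv ?_ ?_ ?_ ?_ ?_ J hJ'
    · simp only [Nat.add_sub_cancel]
      nlinarith
    · simp only [Nat.add_sub_cancel]
      omega
    · intro r r' c c' hr hr' hc hc' heq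
      rw [show (3*(k+1))*r = 3*((k+1)*r) by ring,
        show (3*(k+1))*r' = 3*((k+1)*r') by ring,
        show 2*(k+1)^2+(k+1)^2 = 3*((k+1)*(k+1)) by ring] at heq
      obtain ⟨a, ha⟩ : ∃ a, (k+1)*r = a := ⟨_, rfl⟩
      obtain ⟨b, hb⟩ : ∃ b, (k+1)*r' = b := ⟨_, rfl⟩
      obtain ⟨d, hd⟩ : ∃ d, (k+1)*(k+1) = d := ⟨_, rfl⟩
      rw [ha, hb, hd] at heq
      omega
    · intro r c hr hc h
      rw [show (3*(k+1))*r = 3*((k+1)*r) by ring] at h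
      obtain ⟨a, ha⟩ : ∃ a, (k+1)*r = a := ⟨_, rfl⟩
      rw [ha] at h
      omega
    · intro X hX0 hXv hXd
      obtain ⟨M, hM2⟩ : ∃ M, (k+1)*(k+1) = M := ⟨_, rfl⟩
      have ev : 2*(k+1)^2+(k+1)^2 = 3*M := by rw [← hM2]; ring
      rw [ev] at hXv
      have h3 : X % 3 = 1 ∨ X % 3 = 2 := by omega
      rcases h3 with h3 | h3
      · obtain ⟨j, hj⟩ : ∃ j, X = 3*j + 1 := ⟨X/3, by omega⟩
        obtain ⟨r, c, hr, hc, hrc⟩ := decompNN (k+1) j (by rw [hM2]; omega)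
        refine ⟨r, c, hr, hc, Or.inl ?_⟩
        rw [show (3*(k+1))*r = 3*((k+1)*r) by ring]
        obtain ⟨a, ha⟩ : ∃ a, (k+1)*r = a := ⟨_, rfl⟩
        rw [ha] at hrc ⊢
        omega
      · obtain ⟨j, hj⟩ : ∃ j, 3*M - X = 3*j + 1 := ⟨(3*M-X)/3, by omega⟩
        obtain ⟨r, c, hr, hc, hrc⟩ := decompNN (k+1) j (by rw [hM2]; omega)
        refine ⟨r, c, hr, hc, Or.inr ?_⟩
        rw [ev, show (3*(k+1))*r = 3*((k+1)*r) by ring]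
        obtain ⟨a, ha⟩ : ∃ a, (k+1)*r = a := ⟨_, rfl⟩
        rw [ha] at hrc ⊢
        omega
  · -- t = 2(k+1)^2 : A = 2(k+1), B = 2, m = 2
    haveI : NeZero (2*(k+1)^2+2*(k+1)^2) := ⟨by positivity⟩
    have hmv : 2 ∣ 2*(k+1)^2+2*(k+1)^2 := ⟨2*(k+1)^2, by ring⟩
    have hm : 2*(k+1)^2/(2*(k+1)^2) + 1 = 2 := by
      rw [Nat.div_self (by positivity : 0 < 2*(k+1)^2)]
    have hJ' : ∀ x : ZMod (2*(k+1)^2+2*(k+1)^2), x ∈ J ↔ 2 ∣ x.val := by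
      intro x
      rw [hJ]
      simp only [Set.mem_setOf_eq, hm]
      exact Jchar _ _ hmv x
    refine abstract_main (2*(k+1)^2+2*(k+1)^2) (k+1) (2*(k+1)) 2 2 hn1
      (by omega) (by omega) hmv ?_ ?_ ?_ ?_ ?_ J hJ'
    · simp only [Nat.add_sub_cancel]
      nlinarith
    · simp only [Nat.add_sub_cancel]
      omega
    · intro r r' c c' hr hr' hc hc' heq
      have a1 : (2*(k+1))*r ≤ (2*(k+1))*k := Nat.mul_le_mul_left (2*(k+1)) (by omega)
      have a2 : (2*(k+1))*r' ≤ (2*(k+1))*k := Nat.mul_le_mul_left (2*(k+1)) (by omega)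
      have e1 : 2*(k+1)^2+2*(k+1)^2 = (2*(k+1))*k + (2*(k+1))*k + 4*k + 4 := by ring
      rw [e1] at heq
      have hc2 : c ≤ k := by omega
      have hc2' : c' ≤ k := by omega
      linarith
    · intro r c hr hc h
      rw [show (2*(k+1))*r = 2*((k+1)*r) by ring] at h
      obtain ⟨a, ha⟩ : ∃ a, (k+1)*r = a := ⟨_, rfl⟩
      rw [ha] at h
      omega
    · intro X hX0 hXv hXd
      obtain ⟨M, hM2⟩ : ∃ M, (k+1)*(k+1) = M := ⟨_, rfl⟩
      have ev : 2*(k+1)^2+2*(k+1)^2 = 4*M := by rw [← hM2]; ring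
      rw [ev] at hXv
      by_cases hle : X < 2*M
      · obtain ⟨j, hj⟩ : ∃ j, X = 2*j + 1 := ⟨X/2, by omega⟩
        obtain ⟨r, c, hr, hc, hrc⟩ := decompNN (k+1) j (by rw [hM2]; omega)
        refine ⟨r, c, hr, hc, Or.inl ?_⟩
        rw [show (2*(k+1))*r = 2*((k+1)*r) by ring]
        obtain ⟨a, ha⟩ : ∃ a, (k+1)*r = a := ⟨_, rfl⟩
        rw [ha] at hrc ⊢
        omega
      · obtain ⟨j, hj⟩ : ∃ j, 4*M - X = 2*j + 1 := ⟨(4*M-X)/2, by omega⟩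
        obtain ⟨r, c, hr, hc, hrc⟩ := decompNN (k+1) j (by rw [hM2]; omega)
        refine ⟨r, c, hr, hc, Or.inr ?_⟩
        rw [ev, show (2*(k+1))*r = 2*((k+1)*r) by ring]
        obtain ⟨a, ha⟩ : ∃ a, (k+1)*r = a := ⟨_, rfl⟩
        rw [ha] at hrc ⊢
        omega
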